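/- Let Γ₁,…,Γ_K (K ≥ 1) be d×d complex matrices that are Hermitian, unitary, and pairwise anticommuting, and let U₁,…,U_K be D×D Hermitian unitary matrices. Then for every unit vector α ∈ ℂ^d and every unit vector φ ∈ ℂ^{D²}, the product state ψ = α ⊗ φ satisfies ⟨ψ, W_K(U₁,…,U_K) ψ⟩ ≤ K + 2√K, where W_K(U₁,…,U_K) := ∑_{k=1}^K ( Γₖ ⊗ (Uₖ ⊗ I_D + I_D ⊗ Uₖ) + I_d ⊗ Uₖ ⊗ Uₖ ). -/

import Mathlib

open Matrix
open scoped Kronecker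

section Helpers

variable {n m : Type*} [Fintype n] [Fintype m]

private lemma quad_real' (M : Matrix n n ℂ) (hM : M.IsHermitian) (x : n → ℂ) :
    (starRingEnd ℂ) (star x ⬝ᵥ (M *ᵥ x)) = star x ⬝ᵥ (M *ᵥ x) := by
  have h : star (star x ⬝ᵥ (M *ᵥ x)) = star (M *ᵥ x) ⬝ᵥ star (star x) := by
    rw [star_dotProduct_star]
  rw [star_star, star_mulVec, hM.eq] at h
  calc (starRingEnd ℂ) (star x ⬝ᵥ (M *ᵥ x)) = star (star x ⬝ᵥ (M *ᵥ x)) := rfl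
    _ = (star x ᵥ* M) ⬝ᵥ x := h
    _ = star x ⬝ᵥ (M *ᵥ x) := (dotProduct_mulVec _ _ _).symm

private lemma quad_re' (M : Matrix n n ℂ) (hM : M.IsHermitian) (x : n → ℂ) :
    star x ⬝ᵥ (M *ᵥ x) = (((star x ⬝ᵥ (M *ᵥ x)).re : ℝ) : ℂ) :=
  (Complex.conj_eq_iff_re.mp (quad_real' M hM x)).symm

private lemma dot_self_normSq' (y : n → ℂ) :
    star y ⬝ᵥ y = ((∑ i, Complex.normSq (y i) : ℝ) : ℂ) := by
  push_cast
  simp [dotProduct, ← Complex.normSq_eq_conj_mul_self]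

private lemma cs_bound' (x y : n → ℂ) :
    ‖star x ⬝ᵥ y‖ ≤
      Real.sqrt (∑ i, Complex.normSq (x i)) * Real.sqrt (∑ i, Complex.normSq (y i)) := by
  calc ‖star x ⬝ᵥ y‖ ≤ ∑ i, ‖x i‖ * ‖y i‖ := by
        refine (norm_sum_le _ _).trans ?_
        refine Finset.sum_le_sum fun i _ => ?_
        simp [Pi.star_apply]
    _ ≤ Real.sqrt (∑ i, ‖x i‖ ^ 2) * Real.sqrt (∑ i, ‖y i‖ ^ 2) :=
        Real.sum_mul_le_sqrt_mul_sqrt _ _ _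
    _ = _ := by
        congr 1 <;> (congr 1; refine Finset.sum_congr rfl fun i _ => ?_) <;>
          simp [Complex.normSq_eq_norm_sq]

private lemma quad_abs_le' [DecidableEq n] (M : Matrix n n ℂ) (hM : M.IsHermitian)
    (hU : M * M = 1) (x : n → ℂ) (hx : ∑ i, Complex.normSq (x i) = 1) :
    ‖star x ⬝ᵥ (M *ᵥ x)‖ ≤ 1 := by
  have hy : ∑ i, Complex.normSq ((M *ᵥ x) i) = 1 := by
    have h := congrArg (star x ⬝ᵥ ·) (congrArg (· *ᵥ x) hU)
    have h1 : star (M *ᵥ x) ⬝ᵥ (M *ᵥ x) = star x ⬝ᵥ x := by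
      rw [star_mulVec, hM.eq, dotProduct_mulVec, vecMul_vecMul, hU, vecMul_one]
    rw [dot_self_normSq', dot_self_normSq', hx] at h1
    exact_mod_cast h1
  calc ‖star x ⬝ᵥ (M *ᵥ x)‖ ≤ _ := cs_bound' x (M *ᵥ x)
    _ = 1 := by rw [hx, hy]; simp

private lemma dotProduct_sum' {K : ℕ} (v : n → ℂ) (w : Fin K → n → ℂ) :
    v ⬝ᵥ (∑ k, w k) = ∑ k, v ⬝ᵥ w k := by
  simp only [dotProduct, Finset.sum_apply, Finset.mul_sum]
  rw [Finset.sum_comm]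

private lemma sum_mulVec' {K : ℕ} (M : Fin K → Matrix n n ℂ) (x : n → ℂ) :
    (∑ k, M k) *ᵥ x = ∑ k, (M k *ᵥ x) := by
  ext i
  simp only [mulVec, dotProduct, Finset.sum_apply, Matrix.sum_apply, Finset.sum_mul]
  rw [Finset.sum_comm]

private lemma kron_quad' (A : Matrix n n ℂ) (B : Matrix m m ℂ) (a : n → ℂ) (b : m → ℂ) :
    star (fun p : n × m => a p.1 * b p.2) ⬝ᵥ ((A ⊗ₖ B) *ᵥ (fun p : n × m => a p.1 * b p.2))
      = (star a ⬝ᵥ (A *ᵥ a)) * (star b ⬝ᵥ (B *ᵥ b)) := by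
  have inner : ∀ p : n × m, ((A ⊗ₖ B) *ᵥ fun p : n × m => a p.1 * b p.2) p
      = (A *ᵥ a) p.1 * (B *ᵥ b) p.2 := by
    rintro ⟨i, j⟩
    simp only [mulVec, dotProduct, kroneckerMap_apply, Fintype.sum_prod_type]
    rw [Finset.sum_mul_sum]
    exact Finset.sum_congr rfl fun i' _ => Finset.sum_congr rfl fun j' _ => by ring
  simp only [dotProduct, inner, Pi.star_apply, star_mul', Fintype.sum_prod_type]
  conv_rhs => rw [Finset.sum_mul_sum]
  exact Finset.sum_congr rfl fun i _ => Finset.sum_congr rfl fun j _ => by ring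

private lemma kron_conjTranspose' (A : Matrix n n ℂ) (B : Matrix m m ℂ) :
    (A ⊗ₖ B)ᴴ = Aᴴ ⊗ₖ Bᴴ := by
  ext ⟨i, j⟩ ⟨i', j'⟩
  simp [conjTranspose_apply, kroneckerMap_apply, star_mul', mul_comm]

private lemma kron_hermitian' (A : Matrix n n ℂ) (B : Matrix m m ℂ)
    (hA : A.IsHermitian) (hB : B.IsHermitian) : (A ⊗ₖ B).IsHermitian := by
  unfold Matrix.IsHermitian
  rw [kron_conjTranspose', hA.eq, hB.eq]

private lemma clifford_sum_sq_le_one' [DecidableEq n] {K : ℕ} (Γ : Fin K → Matrix n n ℂ)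
    (hherm : ∀ k, (Γ k).IsHermitian) (hunit : ∀ k, Γ k * Γ k = 1)
    (hanti : ∀ i j, i ≠ j → Γ i * Γ j + Γ j * Γ i = 0)
    (α : n → ℂ) (hα : ∑ i, Complex.normSq (α i) = 1) :
    ∑ k, ((star α ⬝ᵥ (Γ k *ᵥ α)).re) ^ 2 ≤ 1 := by
  set r : Fin K → ℝ := fun k => (star α ⬝ᵥ (Γ k *ᵥ α)).re with hr
  have hz : ∀ k, star α ⬝ᵥ (Γ k *ᵥ α) = ((r k : ℝ) : ℂ) := fun k =>
    quad_re' _ (hherm k) α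
  set s : ℝ := ∑ k, (r k) ^ 2 with hs
  have hs0 : 0 ≤ s := Finset.sum_nonneg fun k _ => sq_nonneg _
  set T : Matrix n n ℂ := ∑ k, ((r k : ℂ)) • Γ k with hT
  have hTh : T.IsHermitian := by
    unfold Matrix.IsHermitian
    rw [hT, Matrix.conjTranspose_sum]
    refine Finset.sum_congr rfl fun k _ => ?_
    rw [Matrix.conjTranspose_smul, (hherm k).eq]
    congr 1
    simp
  have hSd : T * T = ∑ k, ∑ l, ((r k : ℂ) * (r l : ℂ)) • (Γ k * Γ l) := by
    rw [hT, Finset.sum_mul_sum]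
    refine Finset.sum_congr rfl fun k _ => Finset.sum_congr rfl fun l _ => ?_
    rw [smul_mul_assoc, mul_smul_comm, smul_smul]
  have hSd' : T * T = ∑ k, ∑ l, ((r k : ℂ) * (r l : ℂ)) • (Γ l * Γ k) := by
    rw [hSd, Finset.sum_comm]
    exact Finset.sum_congr rfl fun k _ => Finset.sum_congr rfl fun l _ => by
      rw [mul_comm ((r l : ℂ)) ((r k : ℂ))]
  have hTT : T * T = ((s : ℂ)) • (1 : Matrix n n ℂ) := by
    have h2 : T * T + T * T = ((2 * s : ℂ)) • (1 : Matrix n n ℂ) := by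
      nth_rewrite 1 [hSd]
      nth_rewrite 1 [hSd']
      rw [← Finset.sum_add_distrib]
      have : ∀ k : Fin K, (∑ l, ((r k : ℂ) * (r l : ℂ)) • (Γ k * Γ l))
            + (∑ l, ((r k : ℂ) * (r l : ℂ)) • (Γ l * Γ k))
          = ((2 : ℂ) * (r k : ℂ) ^ 2) • (1 : Matrix n n ℂ) := by
        intro k
        rw [← Finset.sum_add_distrib]
        rw [Finset.sum_eq_single k]
        · rw [← smul_add, hunit k]
          rw [show (1 : Matrix n n ℂ) + 1 = (2 : ℂ) • 1 by rw [two_smul]]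
          rw [smul_smul]
          ring_nf
        · intro l _ hlk
          rw [← smul_add, hanti k l (fun h => hlk h.symm), smul_zero]
        · intro h
          exact absurd (Finset.mem_univ k) h
      rw [Finset.sum_congr rfl fun k _ => this k, ← Finset.sum_smul]
      congr 1
      rw [hs]
      push_cast
      rw [Finset.mul_sum]
    have h3 : (2 : ℂ) • (T * T) = (2 : ℂ) • (((s : ℂ)) • (1 : Matrix n n ℂ)) := by
      rw [two_smul, h2, smul_smul]
    exact smul_right_injective _ (two_ne_zero) h3
  have hTα : star α ⬝ᵥ (T *ᵥ α) = ((s : ℝ) : ℂ) := by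
    rw [hT, sum_mulVec', dotProduct_sum']
    have h6 : ∀ k : Fin K, star α ⬝ᵥ ((r k : ℂ) • Γ k) *ᵥ α = ((r k : ℂ)) ^ 2 := by
      intro k
      rw [smul_mulVec, dotProduct_smul, hz k, smul_eq_mul]
      ring
    rw [Finset.sum_congr rfl fun k _ => h6 k, hs]
    push_cast
    rfl
  have hnormT : ∑ i, Complex.normSq ((T *ᵥ α) i) = s := by
    have h4 : star (T *ᵥ α) ⬝ᵥ (T *ᵥ α) = ((s : ℝ) : ℂ) := by
      rw [star_mulVec, hTh.eq, ← dotProduct_mulVec, mulVec_mulVec, hTT,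
        smul_mulVec, one_mulVec, dotProduct_smul, dot_self_normSq', hα]
      simp
    rw [dot_self_normSq'] at h4
    exact_mod_cast h4
  have hle : s ≤ Real.sqrt s := by
    have h5 : ‖star α ⬝ᵥ (T *ᵥ α)‖ ≤ Real.sqrt 1 * Real.sqrt s := by
      have := cs_bound' α (T *ᵥ α)
      rwa [hα, hnormT] at this
    rw [hTα] at h5
    simpa [Real.sqrt_one, abs_of_nonneg hs0] using h5
  nlinarith [Real.sq_sqrt hs0, Real.sqrt_nonneg s]

end Helpers

/-- The game operator `W_K(U₁,…,U_K) = ∑ₖ (Γₖ ⊗ (Uₖ ⊗ I_D + I_D ⊗ Uₖ) + I_d ⊗ Uₖ ⊗ Uₖ)`. -/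
noncomputable def WK {K d D : ℕ} (Γ : Fin K → Matrix (Fin d) (Fin d) ℂ)
    (U : Fin K → Matrix (Fin D) (Fin D) ℂ) :
    Matrix (Fin d × (Fin D × Fin D)) (Fin d × (Fin D × Fin D)) ℂ :=
  ∑ k, (Γ k ⊗ₖ (U k ⊗ₖ (1 : Matrix (Fin D) (Fin D) ℂ)
          + (1 : Matrix (Fin D) (Fin D) ℂ) ⊗ₖ U k)
        + (1 : Matrix (Fin d) (Fin d) ℂ) ⊗ₖ (U k ⊗ₖ U k))

theorem stmt8 (K d D : ℕ) (hK : 1 ≤ K)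
    (Γ : Fin K → Matrix (Fin d) (Fin d) ℂ)
    (hherm : ∀ k, (Γ k).IsHermitian)
    (hunit : ∀ k, Γ k * Γ k = 1)
    (hanti : ∀ i j, i ≠ j → Γ i * Γ j + Γ j * Γ i = 0)
    (U : Fin K → Matrix (Fin D) (Fin D) ℂ)
    (hUherm : ∀ k, (U k).IsHermitian)
    (hUunit : ∀ k, U k * U k = 1)
    (α : Fin d → ℂ) (hα : ∑ i, Complex.normSq (α i) = 1)
    (φ : Fin D × Fin D → ℂ) (hφ : ∑ j, Complex.normSq (φ j) = 1)
    (ψ : Fin d × (Fin D × Fin D) → ℂ) (hψ : ∀ i j, ψ (i, j) = α i * φ j) :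
    (star ψ ⬝ᵥ (WK Γ U *ᵥ ψ)).re ≤ K + 2 * Real.sqrt K := by
  have hψfun : ψ = fun p => α p.1 * φ p.2 := funext fun p => by
    obtain ⟨i, j⟩ := p; exact hψ i j
  subst hψfun
  -- notation
  set B : Fin K → Matrix (Fin D × Fin D) (Fin D × Fin D) ℂ :=
    fun k => U k ⊗ₖ (1 : Matrix (Fin D) (Fin D) ℂ)
      + (1 : Matrix (Fin D) (Fin D) ℂ) ⊗ₖ U k with hB
  set C : Fin K → Matrix (Fin D × Fin D) (Fin D × Fin D) ℂ := fun k => U k ⊗ₖ U k with hC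
  -- hermitian facts
  have hBherm : ∀ k, (B k).IsHermitian := fun k => by
    rw [hB]
    exact ((kron_hermitian' _ _ (hUherm k) Matrix.isHermitian_one).add
      (kron_hermitian' _ _ Matrix.isHermitian_one (hUherm k)))
  have hCherm : ∀ k, (C k).IsHermitian :=
    fun k => kron_hermitian' _ _ (hUherm k) (hUherm k)
  have hCunit : ∀ k, C k * C k = 1 := fun k => by
    rw [hC]
    simp only
    rw [← Matrix.mul_kronecker_mul, hUunit k, Matrix.one_kronecker_one]
  -- real values
  set a : Fin K → ℝ := fun k => (star α ⬝ᵥ (Γ k *ᵥ α)).re with ha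
  set b : Fin K → ℝ := fun k => (star φ ⬝ᵥ (B k *ᵥ φ)).re with hb
  set c : Fin K → ℝ := fun k => (star φ ⬝ᵥ (C k *ᵥ φ)).re with hc
  -- decompose the quadratic form
  have hdecomp : (star (fun p : Fin d × (Fin D × Fin D) => α p.1 * φ p.2)
        ⬝ᵥ (WK Γ U *ᵥ fun p => α p.1 * φ p.2)).re
      = ∑ k, (a k * b k + c k) := by
    rw [WK, sum_mulVec', dotProduct_sum']
    have hterm : ∀ k : Fin K, star (fun p : Fin d × (Fin D × Fin D) => α p.1 * φ p.2)
        ⬝ᵥ ((Γ k ⊗ₖ B k + (1 : Matrix (Fin d) (Fin d) ℂ) ⊗ₖ C k) *ᵥ fun p => α p.1 * φ p.2)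
        = (((a k * b k + c k : ℝ)) : ℂ) := by
      intro k
      rw [add_mulVec, dotProduct_add, kron_quad', kron_quad']
      have h1 : star α ⬝ᵥ ((1 : Matrix (Fin d) (Fin d) ℂ) *ᵥ α) = 1 := by
        rw [one_mulVec, dot_self_normSq', hα]
        simp
      rw [h1, one_mul]
      rw [quad_re' (Γ k) (hherm k) α, quad_re' (B k) (hBherm k) φ, quad_re' (C k) (hCherm k) φ]
      push_cast
      rfl
    rw [Finset.sum_congr rfl fun k _ => hterm k]
    rw [← Complex.ofReal_sum]
    rw [Complex.ofReal_re]
  rw [hdecomp]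
  -- bounds
  have hbb : ∀ k, |b k| ≤ 2 := by
    intro k
    have h1 : ‖star φ ⬝ᵥ ((U k ⊗ₖ (1 : Matrix (Fin D) (Fin D) ℂ)) *ᵥ φ)‖ ≤ 1 :=
      quad_abs_le' _ (kron_hermitian' _ _ (hUherm k) Matrix.isHermitian_one)
        (by rw [← Matrix.mul_kronecker_mul, hUunit k, one_mul, Matrix.one_kronecker_one]) φ hφ
    have h2 : ‖star φ ⬝ᵥ (((1 : Matrix (Fin D) (Fin D) ℂ) ⊗ₖ U k) *ᵥ φ)‖ ≤ 1 :=
      quad_abs_le' _ (kron_hermitian' _ _ Matrix.isHermitian_one (hUherm k))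
        (by rw [← Matrix.mul_kronecker_mul, hUunit k, one_mul, Matrix.one_kronecker_one]) φ hφ
    have h3 : ‖star φ ⬝ᵥ (B k *ᵥ φ)‖ ≤ 2 := by
      rw [hB]
      simp only
      rw [add_mulVec, dotProduct_add]
      calc ‖_ + _‖ ≤ _ + _ := norm_add_le _ _
        _ ≤ 1 + 1 := add_le_add h1 h2
        _ = 2 := by norm_num
    calc |b k| ≤ ‖star φ ⬝ᵥ (B k *ᵥ φ)‖ := Complex.abs_re_le_norm _
      _ ≤ 2 := h3
  have hcc : ∀ k, c k ≤ 1 := by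
    intro k
    have := quad_abs_le' (C k) (hCherm k) (hCunit k) φ hφ
    calc c k ≤ |c k| := le_abs_self _
      _ ≤ ‖star φ ⬝ᵥ (C k *ᵥ φ)‖ := Complex.abs_re_le_norm _
      _ ≤ 1 := this
  have haa : ∑ k, (a k) ^ 2 ≤ 1 :=
    clifford_sum_sq_le_one' Γ hherm hunit hanti α hα
  -- Cauchy–Schwarz on ∑ a b
  have hab : ∑ k, a k * b k ≤ 2 * Real.sqrt K := by
    calc ∑ k, a k * b k
        ≤ Real.sqrt (∑ k, (a k) ^ 2) * Real.sqrt (∑ k, (b k) ^ 2) :=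
          Real.sum_mul_le_sqrt_mul_sqrt _ _ _
      _ ≤ 1 * Real.sqrt (4 * K) := by
          refine mul_le_mul ?_ ?_ (Real.sqrt_nonneg _) zero_le_one
          · rw [show (1 : ℝ) = Real.sqrt 1 by rw [Real.sqrt_one]]
            exact Real.sqrt_le_sqrt haa
          · refine Real.sqrt_le_sqrt ?_
            calc ∑ k, (b k) ^ 2 ≤ ∑ _k : Fin K, (4 : ℝ) := by
                  refine Finset.sum_le_sum fun k _ => ?_
                  have := hbb k
                  nlinarith [abs_nonneg (b k), sq_abs (b k)]
              _ = 4 * K := by simp [mul_comm]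
      _ = 2 * Real.sqrt K := by
          rw [one_mul, show (4 : ℝ) * K = 2 ^ 2 * K by norm_num,
            Real.sqrt_mul (by positivity), Real.sqrt_sq (by norm_num)]
  calc ∑ k, (a k * b k + c k) = (∑ k, a k * b k) + ∑ k, c k := Finset.sum_add_distrib
    _ ≤ 2 * Real.sqrt K + ∑ _k : Fin K, (1 : ℝ) := by
        refine add_le_add hab (Finset.sum_le_sum fun k _ => hcc k)
    _ = 2 * Real.sqrt K + K := by simp
    _ = K + 2 * Real.sqrt K := by ring
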